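/- There exists a constant c > 0 (depending only on p and φ) such that for every fixed p < 1 and φ ∈ [0, π), and for all x₁, x₂, y₁, y₂ ∈ (0, ∞): |(x₁ + e^{iφ}y₁)^p − (x₂ + e^{iφ}y₂)^p| ≤ c·(|x₁^p − x₂^p| + |y₁^p − y₂^p|). -/

import Mathlib

open Complex Real Set

section Aux

lemma re_eq (φ a b : ℝ) : ((a:ℂ) + Complex.exp (↑φ*Complex.I) * ↑b).re = a + Real.cos φ * b := by
  simp [Complex.exp_mul_I, Complex.add_re, Complex.mul_re, Complex.cos_ofReal_re,
    Complex.sin_ofReal_re]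

lemma im_eq (φ a b : ℝ) : ((a:ℂ) + Complex.exp (↑φ*Complex.I) * ↑b).im = Real.sin φ * b := by
  simp [Complex.exp_mul_I, Complex.add_im, Complex.mul_im, Complex.sin_ofReal_re,
    Complex.cos_ofReal_re]

lemma sector_sq (a b c : ℝ) (ha : 0 < a) (hb : 0 < b) (hc1 : -1 < c) (hc2 : c ≤ 1) :
    (1 + c)/2 * a^2 ≤ a^2 + 2*a*b*c + b^2 := by
  rcases le_or_gt 0 c with h | h
  · nlinarith [mul_pos ha hb, sq_nonneg (a-b)]
  · nlinarith [sq_nonneg (a*c+b), mul_nonneg (mul_nonneg (by linarith : (0:ℝ) ≤ 1+c) (by linarith : (0:ℝ) ≤ 1/2 - c)) (sq_nonneg a)]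

lemma normSq_eq (φ a b : ℝ) :
    Complex.normSq ((a:ℂ) + Complex.exp (↑φ*Complex.I) * ↑b) = a^2 + 2*a*b*Real.cos φ + b^2 := by
  rw [Complex.normSq_apply, re_eq, im_eq]
  have hs := Real.sin_sq_add_cos_sq φ
  nlinarith [hs]

lemma cos_lb (φ : ℝ) (hφ0 : 0 ≤ φ) (hφπ : φ < π) : -1 < Real.cos φ := by
  have := Real.strictAntiOn_cos ⟨hφ0, hφπ.le⟩ ⟨Real.pi_pos.le, le_rfl⟩ hφπ
  rwa [Real.cos_pi] at this

lemma sector_lb (φ : ℝ) (hφ0 : 0 ≤ φ) (hφπ : φ < π) (a b : ℝ) (ha : 0 < a) (hb : 0 < b) :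
    Real.sqrt ((1 + Real.cos φ)/2) * a ≤ ‖(a:ℂ) + Complex.exp (↑φ*Complex.I) * ↑b‖ := by
  have h1 := cos_lb φ hφ0 hφπ
  rw [Complex.norm_def]
  rw [Real.le_sqrt (by positivity) (Complex.normSq_nonneg _)]
  rw [normSq_eq]
  have := sector_sq a b (Real.cos φ) ha hb h1 (Real.cos_le_one φ)
  have hsq : Real.sqrt ((1 + Real.cos φ)/2) ^ 2 = (1 + Real.cos φ)/2 :=
    Real.sq_sqrt (by linarith)
  nlinarith [this, hsq]

lemma sector_lb' (φ : ℝ) (hφ0 : 0 ≤ φ) (hφπ : φ < π) (a b : ℝ) (ha : 0 < a) (hb : 0 < b) :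
    Real.sqrt ((1 + Real.cos φ)/2) * b ≤ ‖(a:ℂ) + Complex.exp (↑φ*Complex.I) * ↑b‖ := by
  have h1 := cos_lb φ hφ0 hφπ
  rw [Complex.norm_def]
  rw [Real.le_sqrt (by positivity) (Complex.normSq_nonneg _)]
  rw [normSq_eq]
  have := sector_sq b a (Real.cos φ) hb ha h1 (Real.cos_le_one φ)
  have hsq : Real.sqrt ((1 + Real.cos φ)/2) ^ 2 = (1 + Real.cos φ)/2 :=
    Real.sq_sqrt (by linarith)
  nlinarith [this, hsq]

lemma mem_slit (φ : ℝ) (hφ0 : 0 ≤ φ) (hφπ : φ < π) (a b : ℝ) (ha : 0 < a) (hb : 0 < b) :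
    ((a:ℂ) + Complex.exp (↑φ*Complex.I) * ↑b) ∈ Complex.slitPlane := by
  rw [Complex.mem_slitPlane_iff, re_eq, im_eq]
  rcases eq_or_lt_of_le hφ0 with h | h
  · left; rw [← h, Real.cos_zero]; linarith
  · right
    exact (mul_pos (Real.sin_pos_of_pos_of_lt_pi h hφπ) hb).ne'



lemma exp_zero_aux (p : ℝ) (hp0 : p ≠ 0) : p⁻¹ * (p-1) + (p⁻¹-1) = 0 := by
  field_simp
  ring

lemma uexp_aux (p u : ℝ) (hp0 : p ≠ 0) (hu : 0 < u) :
    (u ^ p⁻¹) ^ (p-1) * u ^ (p⁻¹-1) = 1 := by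
  rw [← Real.rpow_mul hu.le, ← Real.rpow_add hu, exp_zero_aux p hp0, Real.rpow_zero]

lemma step_x (p φ : ℝ) (hp1 : p < 1) (hp0 : p ≠ 0) (hφ0 : 0 ≤ φ) (hφπ : φ < π)
    (y x₁ x₂ : ℝ) (hy : 0 < y) (hx₁ : 0 < x₁) (hx₂ : 0 < x₂) :
    ‖((x₁:ℂ) + Complex.exp (↑φ*Complex.I) * ↑y) ^ (p:ℂ)
        - ((x₂:ℂ) + Complex.exp (↑φ*Complex.I) * ↑y) ^ (p:ℂ)‖
      ≤ Real.sqrt ((1 + Real.cos φ)/2) ^ (p-1) * |x₁ ^ p - x₂ ^ p| := by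
  set M : ℝ := Real.sqrt ((1 + Real.cos φ)/2) with hM
  have hMpos : 0 < M := by
    have := cos_lb φ hφ0 hφπ
    apply Real.sqrt_pos.mpr; linarith
  set w : ℂ := Complex.exp (↑φ*Complex.I) * ↑y with hw
  set f : ℝ → ℂ := fun u => (((u ^ p⁻¹ : ℝ) : ℂ) + w) ^ (p:ℂ) with hf
  set f' : ℝ → ℂ := fun u =>
    (p:ℂ) * (((u ^ p⁻¹ : ℝ) : ℂ) + w) ^ ((p:ℂ)-1) * ((p⁻¹ * u ^ (p⁻¹-1) : ℝ) : ℂ) with hf'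
  have hderiv : ∀ u ∈ Ioi (0:ℝ), HasDerivWithinAt f (f' u) (Ioi 0) u := by
    intro u hu
    have hu' : (0:ℝ) < u := hu
    have h1 : HasDerivAt (fun u : ℝ => u ^ p⁻¹) (p⁻¹ * u ^ (p⁻¹-1)) u :=
      Real.hasDerivAt_rpow_const (Or.inl hu'.ne')
    have hslit : (((u ^ p⁻¹ : ℝ) : ℂ) + w) ∈ Complex.slitPlane :=
      mem_slit φ hφ0 hφπ _ y (Real.rpow_pos_of_pos hu' _) hy
    have hF : HasDerivAt (fun z : ℂ => (z + w) ^ (p:ℂ))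
        ((p:ℂ) * (((u ^ p⁻¹ : ℝ) : ℂ) + w) ^ ((p:ℂ)-1)) ((u ^ p⁻¹ : ℝ) : ℂ) := by
      have := ((hasDerivAt_id (((u ^ p⁻¹ : ℝ) : ℂ))).add_const w).cpow_const (c := (p:ℂ)) hslit
      simpa using this
    have hFr := hF.comp_ofReal
    have h4 := HasDerivAt.scomp u hFr h1
    have h5 : f' u = (p⁻¹ * u ^ (p⁻¹-1)) • ((p:ℂ) * (((u ^ p⁻¹ : ℝ) : ℂ) + w) ^ ((p:ℂ)-1)) := by
      rw [hf']
      rw [Complex.real_smul]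
      ring
    rw [h5]
    exact h4.hasDerivWithinAt
  have hbound : ∀ u ∈ Ioi (0:ℝ), ‖f' u‖ ≤ M ^ (p-1) := by
    intro u hu
    have hu' : (0:ℝ) < u := hu
    set a : ℝ := u ^ p⁻¹ with ha
    have hapos : 0 < a := Real.rpow_pos_of_pos hu' _
    have hZ : M * a ≤ ‖((a:ℝ):ℂ) + w‖ := sector_lb φ hφ0 hφπ a y hapos hy
    have hcast : ((p:ℂ)-1) = (((p-1:ℝ)):ℂ) := by push_cast; ring
    have habs : ‖f' u‖ = |p| * ‖((a:ℝ):ℂ) + w‖ ^ (p-1) * (|p⁻¹| * u ^ (p⁻¹-1)) := by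
      rw [hf']
      simp only [norm_mul, Real.norm_eq_abs, map_mul, Complex.norm_real, hcast,
        Complex.norm_cpow_real, abs_mul, abs_of_pos (Real.rpow_pos_of_pos hu' (p⁻¹-1))]
      rfl
    rw [habs]
    have hle : ‖((a:ℝ):ℂ) + w‖ ^ (p-1) ≤ (M * a) ^ (p-1) :=
      Real.rpow_le_rpow_of_nonpos (by positivity) hZ (by linarith)
    have heq : |p| * (M * a) ^ (p-1) * (|p⁻¹| * u ^ (p⁻¹-1)) = M ^ (p-1) := by
      rw [Real.mul_rpow hMpos.le hapos.le, ha]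
      have h2 := uexp_aux p u hp0 hu'
      have h3 : |p| * |p⁻¹| = 1 := by rw [abs_inv]; field_simp
      calc |p| * (M ^ (p-1) * (u ^ p⁻¹) ^ (p-1)) * (|p⁻¹| * u ^ (p⁻¹-1))
          = (|p| * |p⁻¹|) * M ^ (p-1) * ((u ^ p⁻¹) ^ (p-1) * u ^ (p⁻¹-1)) := by ring
        _ = M ^ (p-1) := by rw [h2, h3]; ring
    calc |p| * ‖((a:ℝ):ℂ) + w‖ ^ (p-1) * (|p⁻¹| * u ^ (p⁻¹-1))
        ≤ |p| * (M * a) ^ (p-1) * (|p⁻¹| * u ^ (p⁻¹-1)) := by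
          apply mul_le_mul_of_nonneg_right (mul_le_mul_of_nonneg_left hle (abs_nonneg p))
          positivity
      _ = M ^ (p-1) := heq
  have hmvt := Convex.norm_image_sub_le_of_norm_hasDerivWithin_le hderiv hbound
    (convex_Ioi 0) (Set.mem_Ioi.mpr (Real.rpow_pos_of_pos hx₂ p))
    (Set.mem_Ioi.mpr (Real.rpow_pos_of_pos hx₁ p))
  have hfx : ∀ x : ℝ, 0 < x → f (x ^ p) = ((x:ℂ) + w) ^ (p:ℂ) := by
    intro x hx
    rw [hf]
    simp only [Real.rpow_rpow_inv hx.le hp0]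
  rw [hfx x₁ hx₁, hfx x₂ hx₂] at hmvt
  simpa [Real.norm_eq_abs] using hmvt



lemma step_y (p φ : ℝ) (hp1 : p < 1) (hp0 : p ≠ 0) (hφ0 : 0 ≤ φ) (hφπ : φ < π)
    (x y₁ y₂ : ℝ) (hx : 0 < x) (hy₁ : 0 < y₁) (hy₂ : 0 < y₂) :
    ‖((x:ℂ) + Complex.exp (↑φ*Complex.I) * ↑y₁) ^ (p:ℂ)
        - ((x:ℂ) + Complex.exp (↑φ*Complex.I) * ↑y₂) ^ (p:ℂ)‖
      ≤ Real.sqrt ((1 + Real.cos φ)/2) ^ (p-1) * |y₁ ^ p - y₂ ^ p| := by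
  set M : ℝ := Real.sqrt ((1 + Real.cos φ)/2) with hM
  have hMpos : 0 < M := by
    have := cos_lb φ hφ0 hφπ
    apply Real.sqrt_pos.mpr; linarith
  set e : ℂ := Complex.exp (↑φ*Complex.I) with he
  set f : ℝ → ℂ := fun v => ((x:ℂ) + e * ((v ^ p⁻¹ : ℝ) : ℂ)) ^ (p:ℂ) with hf
  set f' : ℝ → ℂ := fun v =>
    (p:ℂ) * ((x:ℂ) + e * ((v ^ p⁻¹ : ℝ) : ℂ)) ^ ((p:ℂ)-1) * e * ((p⁻¹ * v ^ (p⁻¹-1) : ℝ) : ℂ)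
    with hf'
  have hderiv : ∀ v ∈ Ioi (0:ℝ), HasDerivWithinAt f (f' v) (Ioi 0) v := by
    intro v hv
    have hv' : (0:ℝ) < v := hv
    have h1 : HasDerivAt (fun v : ℝ => v ^ p⁻¹) (p⁻¹ * v ^ (p⁻¹-1)) v :=
      Real.hasDerivAt_rpow_const (Or.inl hv'.ne')
    have hslit : ((x:ℂ) + e * ((v ^ p⁻¹ : ℝ) : ℂ)) ∈ Complex.slitPlane :=
      mem_slit φ hφ0 hφπ x _ hx (Real.rpow_pos_of_pos hv' _)
    have hF : HasDerivAt (fun z : ℂ => ((x:ℂ) + e * z) ^ (p:ℂ))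
        ((p:ℂ) * ((x:ℂ) + e * ((v ^ p⁻¹ : ℝ) : ℂ)) ^ ((p:ℂ)-1) * e) ((v ^ p⁻¹ : ℝ) : ℂ) := by
      have hin : HasDerivAt (fun z : ℂ => (x:ℂ) + e * z) e ((v ^ p⁻¹ : ℝ) : ℂ) := by
        simpa using ((hasDerivAt_id (((v ^ p⁻¹ : ℝ) : ℂ))).const_mul e).const_add (x:ℂ)
      exact hin.cpow_const (c := (p:ℂ)) hslit
    have hFr := hF.comp_ofReal
    have h4 := HasDerivAt.scomp v hFr h1
    have h5 : f' v = (p⁻¹ * v ^ (p⁻¹-1)) •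
        ((p:ℂ) * ((x:ℂ) + e * ((v ^ p⁻¹ : ℝ) : ℂ)) ^ ((p:ℂ)-1) * e) := by
      rw [hf', Complex.real_smul]; ring
    rw [h5]
    exact h4.hasDerivWithinAt
  have hbound : ∀ v ∈ Ioi (0:ℝ), ‖f' v‖ ≤ M ^ (p-1) := by
    intro v hv
    have hv' : (0:ℝ) < v := hv
    set b : ℝ := v ^ p⁻¹ with hb
    have hbpos : 0 < b := Real.rpow_pos_of_pos hv' _
    have hZ : M * b ≤ ‖(x:ℂ) + e * ((b:ℝ):ℂ)‖ := sector_lb' φ hφ0 hφπ x b hx hbpos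
    have hcast : ((p:ℂ)-1) = (((p-1:ℝ)):ℂ) := by push_cast; ring
    have habs : ‖f' v‖ = |p| * ‖(x:ℂ) + e * ((b:ℝ):ℂ)‖ ^ (p-1)
        * (|p⁻¹| * v ^ (p⁻¹-1)) := by
      rw [hf']
      simp only [norm_mul, Real.norm_eq_abs, map_mul, Complex.norm_real, hcast,
        Complex.norm_cpow_real, abs_mul, abs_of_pos (Real.rpow_pos_of_pos hv' (p⁻¹-1)), he,
        Complex.norm_exp_ofReal_mul_I]
      ring
    rw [habs]
    have hle : ‖(x:ℂ) + e * ((b:ℝ):ℂ)‖ ^ (p-1) ≤ (M * b) ^ (p-1) :=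
      Real.rpow_le_rpow_of_nonpos (by positivity) hZ (by linarith)
    have heq : |p| * (M * b) ^ (p-1) * (|p⁻¹| * v ^ (p⁻¹-1)) = M ^ (p-1) := by
      rw [Real.mul_rpow hMpos.le hbpos.le, hb]
      have h2 := uexp_aux p v hp0 hv'
      have h3 : |p| * |p⁻¹| = 1 := by rw [abs_inv]; field_simp
      calc |p| * (M ^ (p-1) * (v ^ p⁻¹) ^ (p-1)) * (|p⁻¹| * v ^ (p⁻¹-1))
          = (|p| * |p⁻¹|) * M ^ (p-1) * ((v ^ p⁻¹) ^ (p-1) * v ^ (p⁻¹-1)) := by ring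
        _ = M ^ (p-1) := by rw [h2, h3]; ring
    calc |p| * ‖(x:ℂ) + e * ((b:ℝ):ℂ)‖ ^ (p-1) * (|p⁻¹| * v ^ (p⁻¹-1))
        ≤ |p| * (M * b) ^ (p-1) * (|p⁻¹| * v ^ (p⁻¹-1)) := by
          apply mul_le_mul_of_nonneg_right (mul_le_mul_of_nonneg_left hle (abs_nonneg p))
          positivity
      _ = M ^ (p-1) := heq
  have hmvt := Convex.norm_image_sub_le_of_norm_hasDerivWithin_le hderiv hbound
    (convex_Ioi 0) (Set.mem_Ioi.mpr (Real.rpow_pos_of_pos hy₂ p))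
    (Set.mem_Ioi.mpr (Real.rpow_pos_of_pos hy₁ p))
  have hfy : ∀ t : ℝ, 0 < t → f (t ^ p) = ((x:ℂ) + e * (t:ℂ)) ^ (p:ℂ) := by
    intro t ht
    rw [hf]
    simp only [Real.rpow_rpow_inv ht.le hp0]
  rw [hfy y₁ hy₁, hfy y₂ hy₂] at hmvt
  simpa [Real.norm_eq_abs] using hmvt

end Aux

/-- For fixed `p < 1` and `φ ∈ [0, π)`, there is a constant `c > 0`
(depending only on `p` and `φ`) such that for all `x₁, x₂, y₁, y₂ > 0`:
`|(x₁ + e^{iφ}y₁)^p − (x₂ + e^{iφ}y₂)^p| ≤ c·(|x₁^p − x₂^p| + |y₁^p − y₂^p|)`,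
with complex powers taken via the principal branch. -/
theorem complex_power_interpolation_inequality (p φ : ℝ) (hp : p < 1)
    (hφ : φ ∈ Set.Ico (0 : ℝ) Real.pi) :
    ∃ c : ℝ, 0 < c ∧ ∀ x₁ x₂ y₁ y₂ : ℝ, 0 < x₁ → 0 < x₂ → 0 < y₁ → 0 < y₂ →
      ‖((x₁ : ℂ) + Complex.exp (φ * Complex.I) * (y₁ : ℂ)) ^ (p : ℂ)
            - ((x₂ : ℂ) + Complex.exp (φ * Complex.I) * (y₂ : ℂ)) ^ (p : ℂ)‖
        ≤ c * (|x₁ ^ p - x₂ ^ p| + |y₁ ^ p - y₂ ^ p|) := by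
  obtain ⟨hφ0, hφπ⟩ := hφ
  rcases eq_or_ne p 0 with rfl | hp0
  · refine ⟨1, one_pos, fun x₁ x₂ y₁ y₂ hx₁ hx₂ hy₁ hy₂ => ?_⟩
    simp only [Complex.ofReal_zero, Complex.cpow_zero, sub_self, map_zero, norm_zero]
    positivity
  · set M : ℝ := Real.sqrt ((1 + Real.cos φ)/2) with hM
    have hMpos : 0 < M := by
      have := cos_lb φ hφ0 hφπ
      apply Real.sqrt_pos.mpr; linarith
    refine ⟨M ^ (p-1), Real.rpow_pos_of_pos hMpos _, fun x₁ x₂ y₁ y₂ hx₁ hx₂ hy₁ hy₂ => ?_⟩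
    have h1 := step_x p φ hp hp0 hφ0 hφπ y₁ x₁ x₂ hy₁ hx₁ hx₂
    have h2 := step_y p φ hp hp0 hφ0 hφπ x₂ y₁ y₂ hx₂ hy₁ hy₂
    have htri : ‖((x₁ : ℂ) + Complex.exp (↑φ * Complex.I) * (y₁ : ℂ)) ^ (p : ℂ)
            - ((x₂ : ℂ) + Complex.exp (↑φ * Complex.I) * (y₂ : ℂ)) ^ (p : ℂ)‖
        ≤ ‖((x₁:ℂ) + Complex.exp (↑φ*Complex.I) * ↑y₁) ^ (p:ℂ)
            - ((x₂:ℂ) + Complex.exp (↑φ*Complex.I) * ↑y₁) ^ (p:ℂ)‖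
          + ‖((x₂:ℂ) + Complex.exp (↑φ*Complex.I) * ↑y₁) ^ (p:ℂ)
            - ((x₂:ℂ) + Complex.exp (↑φ*Complex.I) * ↑y₂) ^ (p:ℂ)‖ := by
      have := norm_sub_le_norm_sub_add_norm_sub
        (((x₁:ℂ) + Complex.exp (↑φ*Complex.I) * ↑y₁) ^ (p:ℂ))
        (((x₂:ℂ) + Complex.exp (↑φ*Complex.I) * ↑y₁) ^ (p:ℂ))
        (((x₂:ℂ) + Complex.exp (↑φ*Complex.I) * ↑y₂) ^ (p:ℂ))
      exact this
    rw [mul_add]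
    calc _ ≤ _ := htri
      _ ≤ M ^ (p-1) * |x₁ ^ p - x₂ ^ p| + M ^ (p-1) * |y₁ ^ p - y₂ ^ p| := add_le_add h1 h2
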